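/- Let s₁ be the segment from (−1,0) to (1,0) and s₂ the segment from (0,−1) to (0,1). For every segment s in ℝ², d_H(s,s₁)² + d_H(s,s₂)² ≥ 1. -/

import Mathlib

noncomputable abbrev E2 : Type := EuclideanSpace ℝ (Fin 2)

private lemma my_le_infDist {x : E2} {s : Set E2} {r : ℝ} (hs : s.Nonempty)
    (h : ∀ y ∈ s, r ≤ dist x y) : r ≤ Metric.infDist x s := by
  rcases le_or_gt r 0 with hr | hr
  · exact hr.trans Metric.infDist_nonneg
  · have h1 : ENNReal.ofReal r ≤ Metric.infEDist x s := by
      rw [EMetric.le_infEdist]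
      intro y hy
      rw [edist_dist]
      exact ENNReal.ofReal_le_ofReal (h y hy)
    have := ENNReal.toReal_mono (Metric.infEdist_ne_top hs) h1
    rwa [ENNReal.toReal_ofReal hr.le] at this

private lemma dist_sq_E2 (p q : E2) :
    dist p q ^ 2 = (p 0 - q 0) ^ 2 + (p 1 - q 1) ^ 2 := by
  rw [EuclideanSpace.dist_eq, Real.sq_sqrt (by positivity)]
  simp [Fin.sum_univ_two, Real.dist_eq, sq_abs]

private lemma cauchy2 (d0 d1 v0 v1 t : ℝ) :
    (d0 * v1 - d1 * v0) ^ 2 ≤ ((v0 - t * d0) ^ 2 + (v1 - t * d1) ^ 2) * (d0 ^ 2 + d1 ^ 2) := by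
  nlinarith [sq_nonneg (d0 * (v0 - t * d0) + d1 * (v1 - t * d1))]

private lemma infDist_segment_ge (a b p : E2)
    (hDD : 0 < (b 0 - a 0) ^ 2 + (b 1 - a 1) ^ 2) :
    |(b 0 - a 0) * (p 1 - a 1) - (b 1 - a 1) * (p 0 - a 0)| /
      Real.sqrt ((b 0 - a 0) ^ 2 + (b 1 - a 1) ^ 2)
      ≤ Metric.infDist p (segment ℝ a b) := by
  apply my_le_infDist ⟨a, left_mem_segment ℝ a b⟩
  intro y hy
  rw [segment_eq_image'] at hy
  obtain ⟨t, _, rfl⟩ := hy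
  have hy0 : (a + t • (b - a)) 0 = a 0 + t * (b 0 - a 0) := by
    simp [PiLp.add_apply, PiLp.smul_apply, PiLp.sub_apply]
  have hy1 : (a + t • (b - a)) 1 = a 1 + t * (b 1 - a 1) := by
    simp [PiLp.add_apply, PiLp.smul_apply, PiLp.sub_apply]
  have hd : 0 ≤ dist p (a + t • (b - a)) := dist_nonneg
  have hsq : (|(b 0 - a 0) * (p 1 - a 1) - (b 1 - a 1) * (p 0 - a 0)| /
      Real.sqrt ((b 0 - a 0) ^ 2 + (b 1 - a 1) ^ 2)) ^ 2
      ≤ dist p (a + t • (b - a)) ^ 2 := by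
    rw [div_pow, sq_abs, Real.sq_sqrt hDD.le, dist_sq_E2, hy0, hy1,
      div_le_iff₀ hDD]
    exact le_trans (cauchy2 (b 0 - a 0) (b 1 - a 1) (p 0 - a 0) (p 1 - a 1) t)
      (le_of_eq (by ring))
  exact le_of_pow_le_pow_left₀ two_ne_zero hd hsq

private lemma isBounded_seg (a b : E2) : Bornology.IsBounded (segment ℝ a b) := by
  rw [← convexHull_pair]
  exact isBounded_convexHull.2 (Set.Finite.isBounded (by simp))

set_option maxHeartbeats 1000000 in
/-- For every segment s, the Fréchet variance of the two perpendicular unit-radius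
segments at s is at least 1. -/
theorem frechet_variance_ge_one (a b : E2) :
    Metric.hausdorffDist (segment ℝ a b) (segment ℝ (!₂[(-1 : ℝ), 0] : E2) (!₂[(1 : ℝ), 0] : E2)) ^ 2 +
      Metric.hausdorffDist (segment ℝ a b) (segment ℝ (!₂[(0 : ℝ), -1] : E2) (!₂[(0 : ℝ), 1] : E2)) ^ 2
      ≥ 1 := by
  set u1 : E2 := !₂[(-1 : ℝ), 0] with hu1
  set u2 : E2 := !₂[(1 : ℝ), 0] with hu2
  set v1 : E2 := !₂[(0 : ℝ), -1] with hv1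
  set v2 : E2 := !₂[(0 : ℝ), 1] with hv2
  have hu10 : u1 0 = -1 := rfl
  have hu11 : u1 1 = 0 := rfl
  have hu20 : u2 0 = 1 := rfl
  have hu21 : u2 1 = 0 := rfl
  have hv10 : v1 0 = 0 := rfl
  have hv11 : v1 1 = -1 := rfl
  have hv20 : v2 0 = 0 := rfl
  have hv21 : v2 1 = 1 := rfl
  set d1 := Metric.hausdorffDist (segment ℝ a b) (segment ℝ u1 u2) with hd1def
  set d2 := Metric.hausdorffDist (segment ℝ a b) (segment ℝ v1 v2) with hd2def
  have hfin1 : EMetric.hausdorffEdist (segment ℝ u1 u2) (segment ℝ a b) ≠ ⊤ :=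
    Metric.hausdorffEdist_ne_top_of_nonempty_of_bounded
      ⟨u1, left_mem_segment ℝ u1 u2⟩ ⟨a, left_mem_segment ℝ a b⟩
      (isBounded_seg u1 u2) (isBounded_seg a b)
  have hfin2 : EMetric.hausdorffEdist (segment ℝ v1 v2) (segment ℝ a b) ≠ ⊤ :=
    Metric.hausdorffEdist_ne_top_of_nonempty_of_bounded
      ⟨v1, left_mem_segment ℝ v1 v2⟩ ⟨a, left_mem_segment ℝ a b⟩
      (isBounded_seg v1 v2) (isBounded_seg a b)
  have hle1 : ∀ p ∈ segment ℝ u1 u2, Metric.infDist p (segment ℝ a b) ≤ d1 := by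
    intro p hp
    rw [hd1def, Metric.hausdorffDist_comm]
    exact Metric.infDist_le_hausdorffDist_of_mem hp hfin1
  have hle2 : ∀ p ∈ segment ℝ v1 v2, Metric.infDist p (segment ℝ a b) ≤ d2 := by
    intro p hp
    rw [hd2def, Metric.hausdorffDist_comm]
    exact Metric.infDist_le_hausdorffDist_of_mem hp hfin2
  have hd1nn : 0 ≤ d1 := Metric.hausdorffDist_nonneg
  have hd2nn : 0 ≤ d2 := Metric.hausdorffDist_nonneg
  by_cases hab : a = b
  · -- degenerate case: s is a point
    subst hab
    have hseg : segment ℝ a a = {a} := segment_same ℝ a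
    have h1 : dist u1 a ≤ d1 := by
      have := hle1 u1 (left_mem_segment ℝ u1 u2)
      rwa [hseg, Metric.infDist_singleton] at this
    have h2 : dist u2 a ≤ d1 := by
      have := hle1 u2 (right_mem_segment ℝ u1 u2)
      rwa [hseg, Metric.infDist_singleton] at this
    have h1' : dist u1 a ^ 2 ≤ d1 ^ 2 := pow_le_pow_left₀ dist_nonneg h1 2
    have h2' : dist u2 a ^ 2 ≤ d1 ^ 2 := pow_le_pow_left₀ dist_nonneg h2 2
    rw [dist_sq_E2, hu10, hu11] at h1'
    rw [dist_sq_E2, hu20, hu21] at h2'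
    nlinarith [sq_nonneg d2, sq_nonneg (a 0), sq_nonneg (a 1)]
  · have hDD : 0 < (b 0 - a 0) ^ 2 + (b 1 - a 1) ^ 2 := by
      rcases lt_or_eq_of_le (by positivity : (0:ℝ) ≤ (b 0 - a 0) ^ 2 + (b 1 - a 1) ^ 2) with h | h
      · exact h
      · exfalso
        apply hab
        have h0 : b 0 = a 0 := by nlinarith [sq_nonneg (b 0 - a 0), sq_nonneg (b 1 - a 1)]
        have h1 : b 1 = a 1 := by nlinarith [sq_nonneg (b 0 - a 0), sq_nonneg (b 1 - a 1)]
        ext i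
        fin_cases i
        · exact h0.symm
        · exact h1.symm
    -- key squared bounds for the four endpoints
    have sqbound : ∀ (p : E2) (d : ℝ), Metric.infDist p (segment ℝ a b) ≤ d →
        ((b 0 - a 0) * (p 1 - a 1) - (b 1 - a 1) * (p 0 - a 0)) ^ 2
          ≤ d ^ 2 * ((b 0 - a 0) ^ 2 + (b 1 - a 1) ^ 2) := by
      intro p d hpd
      have h := (infDist_segment_ge a b p hDD).trans hpd
      have hnn : 0 ≤ |(b 0 - a 0) * (p 1 - a 1) - (b 1 - a 1) * (p 0 - a 0)| /
          Real.sqrt ((b 0 - a 0) ^ 2 + (b 1 - a 1) ^ 2) := by positivity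
      have hsq := pow_le_pow_left₀ hnn h 2
      rw [div_pow, sq_abs, Real.sq_sqrt hDD.le, div_le_iff₀ hDD] at hsq
      exact hsq
    have k1 := sqbound u1 d1 (hle1 u1 (left_mem_segment ℝ u1 u2))
    have k2 := sqbound u2 d1 (hle1 u2 (right_mem_segment ℝ u1 u2))
    have k3 := sqbound v1 d2 (hle2 v1 (left_mem_segment ℝ v1 v2))
    have k4 := sqbound v2 d2 (hle2 v2 (right_mem_segment ℝ v1 v2))
    rw [hu10, hu11] at k1
    rw [hu20, hu21] at k2
    rw [hv10, hv11] at k3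
    rw [hv20, hv21] at k4
    nlinarith [sq_nonneg ((b 0 - a 0) * (a 1) - (b 1 - a 1) * (a 0)), hDD,
      mul_pos hDD hDD]
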